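/- Let (P,≤) be a finite diamond-free connected poset that has no full subposet isomorphic to Z_n for any even n ≥ 4. Then the Hasse diagram of (P,≤) is a tree (contains no cycle as an undirected graph). -/

import Mathlib

namespace Hasse19

variable {P : Type*} [PartialOrder P]

/-- The diamond-free hypothesis. -/
def Dfree (P : Type*) [PartialOrder P] : Prop :=
  ¬ ∃ a b c d : P, a ≤ b ∧ b ≤ d ∧ a ≤ c ∧ c ≤ d ∧ ¬ b ≤ c ∧ ¬ c ≤ b

lemma Dfree.chain (h : Dfree P) {a u v d : P} (h1 : a ≤ u) (h2 : u ≤ d)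
    (h3 : a ≤ v) (h4 : v ≤ d) : u ≤ v ∨ v ≤ u := by
  by_contra hc
  push_neg at hc
  exact h ⟨a, u, v, d, h1, h2, h3, h4, hc.1, hc.2⟩

lemma cov_inc_top {a b c : P} (hb : a ⋖ b) (hc : a ⋖ c) (hne : b ≠ c) : ¬ b ≤ c := by
  intro hle
  exact hc.2 hb.1 (lt_of_le_of_ne hle hne)

lemma cov_inc_bot {a b c : P} (hb : b ⋖ a) (hc : c ⋖ a) (hne : b ≠ c) : ¬ b ≤ c := by
  intro hle
  exact hb.2 (lt_of_le_of_ne hle hne) hc.1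

lemma cov_diamond_top (h : Dfree P) {a b c d : P} (hb : a ⋖ b) (hc : a ⋖ c)
    (hne : b ≠ c) (h1 : b ≤ d) (h2 : c ≤ d) : False :=
  h ⟨a, b, c, d, hb.1.le, h1, hc.1.le, h2, cov_inc_top hb hc hne, cov_inc_top hc hb hne.symm⟩

lemma cov_diamond_bot (h : Dfree P) {a b c d : P} (hb : b ⋖ a) (hc : c ⋖ a)
    (hne : b ≠ c) (h1 : d ≤ b) (h2 : d ≤ c) : False :=
  h ⟨d, b, c, a, h1, hb.1.le, h2, hc.1.le, cov_inc_bot hb hc hne, cov_inc_bot hc hb hne.symm⟩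

/-- A closed fence configuration of length `m`. -/
structure Fence (x y : ℕ → P) (m : ℕ) : Prop where
  two_le : 2 ≤ m
  ne : ∀ i < m, ∀ j < m, x i ≠ y j
  le1 : ∀ i < m, x i ≤ y i
  le2 : ∀ i, i + 1 < m → x (i + 1) ≤ y i
  le0 : x 0 ≤ y (m - 1)
  max2 : ∀ i, i + 1 < m → ∀ d, y i ≤ d → y (i + 1) ≤ d → False
  max0 : ∀ d, y (m - 1) ≤ d → y 0 ≤ d → False
  min2 : ∀ i, i + 1 < m → ∀ d, d ≤ x i → d ≤ x (i + 1) → False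
  min0 : ∀ d, d ≤ x (m - 1) → d ≤ x 0 → False

/-- Existence of a chord of span `t` in a fence of length `m`. -/
def HasChord (x y : ℕ → P) (m t : ℕ) : Prop :=
  ∃ a b, a < m ∧ b < m ∧ 1 ≤ t ∧ t + 2 ≤ m ∧ (b + t + 1 = a ∨ b + t + 1 = a + m) ∧ x a ≤ y b

/-- Rotating a fence. -/
lemma Fence.rot {x y : ℕ → P} {m : ℕ} (F : Fence x y m) (r : ℕ) (hr : r < m) :
    Fence (fun i => x (if i + r < m then i + r else i + r - m))
      (fun i => y (if i + r < m then i + r else i + r - m)) m := by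
  have h2 := F.two_le
  have key : ∀ i < m, (if i + r < m then i + r else i + r - m) < m := by
    intro i hi; split <;> omega
  constructor
  · exact h2
  · intro i hi j hj; exact F.ne _ (key i hi) _ (key j hj)
  · intro i hi; exact F.le1 _ (key i hi)
  · intro i hi
    by_cases h1 : i + 1 + r < m
    · rw [if_pos h1, if_pos (by omega)]
      have : i + 1 + r = (i + r) + 1 := by omega
      rw [this]; exact F.le2 _ (by omega)
    · rw [if_neg h1]
      by_cases h3 : i + r < m
      · rw [if_pos h3]
        have e1 : i + 1 + r - m = 0 := by omega
        have e2 : i + r = m - 1 := by omega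
        rw [e1, e2]; exact F.le0
      · rw [if_neg h3]
        have e1 : i + 1 + r - m = (i + r - m) + 1 := by omega
        rw [e1]; exact F.le2 _ (by omega)
  · have e0 : (0 : ℕ) + r < m := by omega
    rw [if_pos e0]
    by_cases h1 : m - 1 + r < m
    · rw [if_pos h1]
      have : r = 0 := by omega
      subst this
      have : m - 1 + 0 = m - 1 := by omega
      rw [this]; simpa using F.le0
    · rw [if_neg h1]
      have e1 : 0 + r = (m - 1 + r - m) + 1 := by omega
      rw [e1]; exact F.le2 _ (by omega)
  · intro i hi d hd1 hd2
    by_cases h1 : i + 1 + r < m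
    · rw [if_pos (show i + r < m by omega)] at hd1
      rw [if_pos h1] at hd2
      have : i + 1 + r = (i + r) + 1 := by omega
      rw [this] at hd2
      exact F.max2 _ (by omega) d hd1 hd2
    · by_cases h3 : i + r < m
      · rw [if_pos h3] at hd1
        rw [if_neg h1] at hd2
        have e1 : i + 1 + r - m = 0 := by omega
        have e2 : i + r = m - 1 := by omega
        rw [e1] at hd2; rw [e2] at hd1
        exact F.max0 d hd1 hd2
      · rw [if_neg h3] at hd1; rw [if_neg h1] at hd2
        have e1 : i + 1 + r - m = (i + r - m) + 1 := by omega
        rw [e1] at hd2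
        exact F.max2 _ (by omega) d hd1 hd2
  · intro d hd1 hd2
    rw [if_pos (show (0:ℕ) + r < m by omega)] at hd2
    by_cases h1 : m - 1 + r < m
    · rw [if_pos h1] at hd1
      have : r = 0 := by omega
      subst this
      have e2 : m - 1 + 0 = m - 1 := by omega
      rw [e2] at hd1
      exact F.max0 d hd1 (by simpa using hd2)
    · rw [if_neg h1] at hd1
      have e1 : 0 + r = (m - 1 + r - m) + 1 := by omega
      rw [e1] at hd2
      exact F.max2 _ (by omega) d hd1 hd2
  · intro i hi d hd1 hd2
    by_cases h1 : i + 1 + r < m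
    · rw [if_pos (show i + r < m by omega)] at hd1
      rw [if_pos h1] at hd2
      have : i + 1 + r = (i + r) + 1 := by omega
      rw [this] at hd2
      exact F.min2 _ (by omega) d hd1 hd2
    · by_cases h3 : i + r < m
      · rw [if_pos h3] at hd1
        rw [if_neg h1] at hd2
        have e1 : i + 1 + r - m = 0 := by omega
        have e2 : i + r = m - 1 := by omega
        rw [e1] at hd2; rw [e2] at hd1
        exact F.min0 d hd1 hd2
      · rw [if_neg h3] at hd1; rw [if_neg h1] at hd2
        have e1 : i + 1 + r - m = (i + r - m) + 1 := by omega
        rw [e1] at hd2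
        exact F.min2 _ (by omega) d hd1 hd2
  · intro d hd1 hd2
    rw [if_pos (show (0:ℕ) + r < m by omega)] at hd2
    by_cases h1 : m - 1 + r < m
    · rw [if_pos h1] at hd1
      have : r = 0 := by omega
      subst this
      have e2 : m - 1 + 0 = m - 1 := by omega
      rw [e2] at hd1
      exact F.min0 d hd1 (by simpa using hd2)
    · rw [if_neg h1] at hd1
      have e1 : 0 + r = (m - 1 + r - m) + 1 := by omega
      rw [e1] at hd2
      exact F.min2 _ (by omega) d hd1 hd2



 

variable {P : Type*} [PartialOrder P]

 
/-- Reversing a fence. -/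
lemma Fence.rev {x y : ℕ → P} {m : ℕ} (F : Fence x y m) :
    Fence (fun i => if i = 0 then x 0 else x (m - i)) (fun i => y (m - 1 - i)) m := by
  have h2 := F.two_le
  constructor
  · exact h2
  · intro i hi j hj
    split
    · exact F.ne 0 (by omega) _ (by omega)
    · exact F.ne (m - i) (by omega) _ (by omega)
  · intro i hi
    by_cases h : i = 0
    · subst h; rw [if_pos rfl]
      have : m - 1 - 0 = m - 1 := by omega
      rw [this]; exact F.le0
    · rw [if_neg h]
      have e : m - i = (m - 1 - i) + 1 := by omega
      rw [e]; exact F.le2 _ (by omega)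
  · intro i hi
    rw [if_neg (by omega)]
    have e : m - (i + 1) = m - 1 - i := by omega
    rw [e]; exact F.le1 _ (by omega)
  · rw [if_pos rfl]
    have e : m - 1 - (m - 1) = 0 := by omega
    rw [e]; exact F.le1 0 (by omega)
  · intro i hi d hd1 hd2
    have e1 : m - 1 - (i + 1) + 1 = m - 1 - i := by omega
    refine F.max2 (m - 1 - (i + 1)) (by omega) d hd2 ?_
    rw [e1]; exact hd1
  · intro d hd1 hd2
    have e1 : m - 1 - (m - 1) = 0 := by omega
    rw [e1] at hd1
    have e2 : m - 1 - 0 = m - 1 := by omega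
    rw [e2] at hd2
    exact F.max0 d hd2 hd1
  · intro i hi d hd1 hd2
    by_cases h : i = 0
    · subst h
      rw [if_pos rfl] at hd1; rw [if_neg (by omega)] at hd2
      have e : m - (0 + 1) = m - 1 := by omega
      rw [e] at hd2
      exact F.min0 d hd2 hd1
    · rw [if_neg h] at hd1; rw [if_neg (by omega)] at hd2
      have e : m - i = (m - (i + 1)) + 1 := by omega
      rw [e] at hd1
      exact F.min2 _ (by omega) d hd2 hd1
  · intro d hd1 hd2
    rw [if_neg (by omega)] at hd1
    rw [if_pos rfl] at hd2
    have e : m - (m - 1) = 0 + 1 := by omega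
    rw [e] at hd1
    exact F.min2 0 (by omega) d hd2 hd1

 
/-- A chord in a fence yields a chord of complementary span in the reversed fence. -/
lemma hasChord_rev {x y : ℕ → P} {m t : ℕ} (h : HasChord x y m t) :
    HasChord (fun i => if i = 0 then x 0 else x (m - i)) (fun i => y (m - 1 - i)) m
      (m - 1 - t) := by
  obtain ⟨a, b, ha, hb, ht1, ht2, hs, hle⟩ := h
  refine ⟨if a = 0 then 0 else m - a, m - 1 - b, by split <;> omega, by omega, by omega, by omega,
    ?_, ?_⟩
  · split <;> omega
  · simp only
    have e1 : m - 1 - (m - 1 - b) = b := by omega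
    rw [e1]
    split
    · next h0 => subst h0; simp only [if_pos rfl]; exact hle
    · next h0 =>
      rw [if_neg (show ¬ m - a = 0 by omega)]
      have : m - (m - a) = a := by omega
      rw [this]; exact hle

 
/-- A chord may be rotated to base position `b = 0`, at the price of rotating the fence. -/
lemma hasChord_rot {x y : ℕ → P} {m t b a : ℕ} (hb : b < m) (ha : a < m)
    (hs : b + t + 1 = a ∨ b + t + 1 = a + m) (ht1 : 1 ≤ t) (ht2 : t + 2 ≤ m) (hle : x a ≤ y b) :
    (fun i => x (if i + b < m then i + b else i + b - m)) (t + 1) ≤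
      (fun i => y (if i + b < m then i + b else i + b - m)) 0 := by
  simp only
  rw [if_pos (show 0 + b < m by omega)]
  have e0 : 0 + b = b := by omega
  rw [e0]
  by_cases h : t + 1 + b < m
  · rw [if_pos h]
    have : t + 1 + b = a := by omega
    rw [this]; exact hle
  · rw [if_neg h]
    have : t + 1 + b - m = a := by omega
    rw [this]; exact hle

 

/-- Splicing a fence along a chord based at `b = 0`. -/
lemma splice (hdf : Dfree P) {X Y : ℕ → P} {m t : ℕ} (F : Fence X Y m)
    (ht1 : 1 ≤ t) (ht2 : t + 2 ≤ m) (hch : X (t + 1) ≤ Y 0)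
    (ha1 : ¬ X (t + 1) ≤ X 1) (ha2 : ¬ X 1 ≤ X (t + 1))
    (hb1 : ¬ Y 0 ≤ Y t) (hb2 : ¬ Y t ≤ Y 0) :
    Fence (fun s => if s = 0 then X (t + 1) else X s) Y (t + 1) := by
  have h2 := F.two_le
  constructor
  · omega
  · intro i hi j hj
    split
    · exact F.ne (t + 1) (by omega) _ (by omega)
    · exact F.ne i (by omega) _ (by omega)
  · intro i hi
    split
    · next h => subst h; exact hch
    · next h => exact F.le1 i (by omega)
  · intro i hi
    simp only [if_neg (Nat.succ_ne_zero i)]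
    exact F.le2 i (by omega)
  · simp only [if_pos rfl]
    have e : t + 1 - 1 = t := by omega
    rw [e]
    exact F.le2 t (by omega)
  · intro i hi d hd1 hd2
    exact F.max2 i (by omega) d hd1 hd2
  · intro d hd1 hd2
    have e : t + 1 - 1 = t := by omega
    rw [e] at hd1
    have hc := hdf.chain (F.le2 t (by omega)) hd1 hch hd2
    rcases hc with hc | hc
    · exact hb2 hc
    · exact hb1 hc
  · intro i hi d hd1 hd2
    by_cases h0 : i = 0
    · subst h0
      rw [if_pos rfl] at hd1
      rw [if_neg (by omega)] at hd2
      have hc := hdf.chain hd1 hch hd2 (F.le2 0 (by omega))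
      rcases hc with hc | hc
      · exact ha1 hc
      · exact ha2 hc
    · rw [if_neg h0] at hd1
      rw [if_neg (by omega)] at hd2
      exact F.min2 i (by omega) d hd1 hd2
  · intro d hd1 hd2
    rw [if_neg (by omega)] at hd1
    rw [if_pos rfl] at hd2
    have e : t + 1 - 1 = t := by omega
    rw [e] at hd1
    exact F.min2 t (by omega) d hd1 hd2

lemma no_fence (hdf : Dfree P)
    (hZ : ∀ n : ℕ, 4 ≤ n → Even n →
      ¬ ∃ f : Fin n → P, Function.Injective f ∧
        ∀ a b : Fin n,
          (a = b ∨ (Even a.val ∧ (b.val = (a.val + 1) % n ∨ b.val = (a.val + (n - 1)) % n)))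
            ↔ f a ≤ f b)
    {x₁ y₁ : ℕ → P} {m₁ : ℕ} (F₁ : Fence x₁ y₁ m₁) : False := by
  classical
  obtain ⟨m, ⟨x₀, y₀, F₀⟩, hmin⟩ :
      ∃ m, (∃ x' y' : ℕ → P, Fence x' y' m) ∧
        ∀ m', m' < m → ¬ ∃ x' y' : ℕ → P, Fence x' y' m' := by
    have hSne : Set.Nonempty {m' | ∃ x' y' : ℕ → P, Fence x' y' m'} := ⟨m₁, x₁, y₁, F₁⟩
    exact ⟨_, Nat.sInf_mem hSne, fun m' h => Nat.notMem_of_lt_sInf h⟩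
  have hm2 : 2 ≤ m := F₀.two_le
  -- Step 1: no fence of the minimal size has a chord.
  have hNoChord : ∀ (x y : ℕ → P) (t : ℕ), Fence x y m → ¬ HasChord x y m t := by
    by_contra hcon
    push_neg at hcon
    obtain ⟨x₂, y₂, t₂, F₂, hC₂⟩ := hcon
    obtain ⟨t, ⟨x₃, y₃, F₃, hC₃⟩, hCSmin⟩ :
        ∃ t, (∃ x' y' : ℕ → P, Fence x' y' m ∧ HasChord x' y' m t) ∧
          ∀ s, (∃ x' y' : ℕ → P, Fence x' y' m ∧ HasChord x' y' m s) → t ≤ s := by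
      have hCSne : Set.Nonempty {t | ∃ x' y' : ℕ → P, Fence x' y' m ∧ HasChord x' y' m t} :=
        ⟨t₂, x₂, y₂, F₂, hC₂⟩
      exact ⟨_, Nat.sInf_mem hCSne, fun s hs => Nat.sInf_le hs⟩
    have hmem : ∀ (x' y' : ℕ → P) (s : ℕ), Fence x' y' m → HasChord x' y' m s →
        t ≤ s ∧ t + s + 1 ≤ m := by
      intro x' y' s hF hC
      have h1 : t ≤ s := hCSmin s ⟨x', y', hF, hC⟩
      have h2 : t ≤ m - 1 - s := hCSmin _ ⟨_, _, hF.rev, hasChord_rev hC⟩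
      obtain ⟨_, _, _, _, hs1, hs2, _, _⟩ := hC
      omega
    obtain ⟨a, b, ha, hb, ht1, ht2, hs, hle⟩ := hC₃
    set X := fun i => x₃ (if i + b < m then i + b else i + b - m) with hX
    set Y := fun i => y₃ (if i + b < m then i + b else i + b - m) with hY
    have FX : Fence X Y m := F₃.rot b hb
    have hch : X (t + 1) ≤ Y 0 := hasChord_rot hb ha hs ht1 ht2 hle
    have hA1 : ¬ X (t + 1) ≤ X 1 := by
      intro h
      by_cases h1 : t = 1
      · subst h1
        exact FX.min2 1 (by omega) (X 2) h le_rfl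
      · have hC : HasChord X Y m (t - 1) :=
          ⟨t + 1, 1, by omega, by omega, by omega, by omega, Or.inl (by omega),
            h.trans (FX.le1 1 (by omega))⟩
        have := (hmem X Y (t - 1) FX hC).1
        omega
    have hA2 : ¬ X 1 ≤ X (t + 1) := by
      intro h
      by_cases h1 : t = 1
      · subst h1
        exact FX.min2 1 (by omega) (X 1) le_rfl h
      · have hC : HasChord X Y m (m - t) :=
          ⟨1, t, by omega, by omega, by omega, by omega, Or.inr (by omega),
            h.trans (FX.le2 t (by omega))⟩
        have := (hmem X Y (m - t) FX hC).2
        omega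
    have hB1 : ¬ Y 0 ≤ Y t := by
      intro h
      by_cases h1 : t = 1
      · subst h1
        exact FX.max2 0 (by omega) (Y 1) h le_rfl
      · have hC : HasChord X Y m (m - t) :=
          ⟨1, t, by omega, by omega, by omega, by omega, Or.inr (by omega),
            (FX.le2 0 (by omega)).trans h⟩
        have := (hmem X Y (m - t) FX hC).2
        omega
    have hB2 : ¬ Y t ≤ Y 0 := by
      intro h
      by_cases h1 : t = 1
      · subst h1
        exact FX.max2 0 (by omega) (Y 0) le_rfl h
      · have hC : HasChord X Y m (t - 1) :=
          ⟨t, 0, by omega, by omega, by omega, by omega, Or.inl (by omega),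
            (FX.le1 t (by omega)).trans h⟩
        have := (hmem X Y (t - 1) FX hC).1
        omega
    have Fsp := splice hdf FX ht1 ht2 hch hA1 hA2 hB1 hB2
    exact hmin (t + 1) (by omega) ⟨_, _, Fsp⟩
  -- Step 2: adjacency classification in the minimal fence.
  have hxy : ∀ a, a < m → ∀ b, b < m → x₀ a ≤ y₀ b →
      (b = a ∨ b + 1 = a ∨ (a = 0 ∧ b = m - 1)) := by
    intro a ha b hb h
    by_contra hcon
    refine hNoChord x₀ y₀ (if b < a then a - 1 - b else a + m - 1 - b) F₀
      ⟨a, b, ha, hb, ?_, ?_, ?_, h⟩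
    · split <;> omega
    · split <;> omega
    · split
      · exact Or.inl (by omega)
      · exact Or.inr (by omega)
  have hxx : ∀ a, a < m → ∀ b, b < m → x₀ a ≤ x₀ b → a = b := by
    intro a ha b hb h
    by_contra hne
    have h1 := hxy a ha b hb (h.trans (F₀.le1 b hb))
    by_cases hb0 : b = 0
    · subst hb0
      have h2 := hxy a ha (m - 1) (by omega) (h.trans F₀.le0)
      rcases h2 with h2 | h2 | ⟨h2a, _⟩
      · refine F₀.min0 (x₀ a) (by rw [← h2]) h
      · omega
      · rcases h1 with h1 | h1 | h1 <;> omega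
    · have hble : x₀ b ≤ y₀ (b - 1) := by
        have := F₀.le2 (b - 1) (by omega)
        rwa [show b - 1 + 1 = b by omega] at this
      have h2 := hxy a ha (b - 1) (by omega) (h.trans hble)
      have hab : b = a + 1 := by
        rcases h2 with h2 | h2 | h2 <;> omega
      subst hab
      exact F₀.min2 a (by omega) (x₀ a) le_rfl h
  have hyy : ∀ a, a < m → ∀ b, b < m → y₀ a ≤ y₀ b → a = b := by
    intro a ha b hb h
    by_contra hne
    have h1 := hxy a ha b hb ((F₀.le1 a ha).trans h)
    rcases h1 with h1 | h1 | ⟨h1a, h1b⟩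
    · omega
    · refine F₀.max2 b (by omega) (y₀ b) le_rfl ?_
      rw [show b + 1 = a from h1]; exact h
    · refine F₀.max0 (y₀ b) (by rw [h1b]) ?_
      rw [← h1a]; exact h
  have hyx : ∀ a, a < m → ∀ b, b < m → ¬ y₀ a ≤ x₀ b := by
    intro a ha b hb h
    have hab := hyy a ha b hb (h.trans (F₀.le1 b hb))
    subst hab
    exact F₀.ne a ha a ha (le_antisymm (F₀.le1 a ha) h)
  -- Step 3: the minimal fence is a crown, contradicting `hZ`.
  refine hZ (2 * m) (by omega) ⟨m, by omega⟩
    ⟨fun v => if v.val % 2 = 0 then x₀ (v.val / 2) else y₀ (v.val / 2), ?_, ?_⟩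
  · intro a b hab
    have haval : a.val < 2 * m := a.isLt
    have hbval : b.val < 2 * m := b.isLt
    dsimp only at hab
    by_cases hpa : a.val % 2 = 0 <;> by_cases hpb : b.val % 2 = 0
    · rw [if_pos hpa, if_pos hpb] at hab
      have := hxx _ (by omega) _ (by omega) (le_of_eq hab)
      exact Fin.ext (by omega)
    · rw [if_pos hpa, if_neg hpb] at hab
      exact absurd hab (F₀.ne _ (by omega) _ (by omega))
    · rw [if_neg hpa, if_pos hpb] at hab
      exact absurd hab.symm (F₀.ne _ (by omega) _ (by omega))
    · rw [if_neg hpa, if_neg hpb] at hab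
      have := hyy _ (by omega) _ (by omega) (le_of_eq hab)
      exact Fin.ext (by omega)
  · intro a b
    have haval : a.val < 2 * m := a.isLt
    have hbval : b.val < 2 * m := b.isLt
    dsimp only
    constructor
    · rintro (rfl | ⟨hEv, hbv | hbv⟩)
      · exact le_rfl
      · have hpa : a.val % 2 = 0 := Nat.even_iff.mp hEv
        have hb' : b.val = a.val + 1 := by
          rw [hbv, Nat.mod_eq_of_lt (by omega)]
        rw [if_pos hpa, if_neg (by omega : ¬ b.val % 2 = 0)]
        rw [show b.val / 2 = a.val / 2 by omega]
        exact F₀.le1 _ (by omega)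
      · have hpa : a.val % 2 = 0 := Nat.even_iff.mp hEv
        by_cases ha0 : a.val = 0
        · have hb' : b.val = 2 * m - 1 := by
            rw [hbv, ha0, Nat.zero_add, Nat.mod_eq_of_lt (by omega)]
          rw [if_pos hpa, if_neg (by omega : ¬ b.val % 2 = 0)]
          rw [show a.val / 2 = 0 by omega, show b.val / 2 = m - 1 by omega]
          exact F₀.le0
        · have hb' : b.val = a.val - 1 := by
            rw [hbv, show a.val + (2 * m - 1) = (a.val - 1) + 1 * (2 * m) by omega,
              Nat.add_mul_mod_self_right, Nat.mod_eq_of_lt (by omega)]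
          rw [if_pos hpa, if_neg (by omega : ¬ b.val % 2 = 0)]
          rw [show b.val / 2 = a.val / 2 - 1 by omega]
          have := F₀.le2 (a.val / 2 - 1) (by omega)
          rwa [show a.val / 2 - 1 + 1 = a.val / 2 by omega] at this
    · intro h
      by_cases hpa : a.val % 2 = 0 <;> by_cases hpb : b.val % 2 = 0
      · rw [if_pos hpa, if_pos hpb] at h
        have := hxx _ (by omega) _ (by omega) h
        exact Or.inl (Fin.ext (by omega))
      · rw [if_pos hpa, if_neg hpb] at h
        have hadj := hxy _ (by omega) _ (by omega) h
        refine Or.inr ⟨Nat.even_iff.mpr hpa, ?_⟩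
        rcases hadj with h1 | h1 | ⟨h1a, h1b⟩
        · left
          rw [Nat.mod_eq_of_lt (show a.val + 1 < 2 * m by omega)]
          omega
        · right
          rw [show a.val + (2 * m - 1) = (a.val - 1) + 1 * (2 * m) by omega,
            Nat.add_mul_mod_self_right, Nat.mod_eq_of_lt (by omega)]
          omega
        · right
          rw [show a.val + (2 * m - 1) = 2 * m - 1 by omega, Nat.mod_eq_of_lt (by omega)]
          omega
      · rw [if_neg hpa, if_pos hpb] at h
        exact absurd h (hyx _ (by omega) _ (by omega))
      · rw [if_neg hpa, if_neg hpb] at h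
        have := hyy _ (by omega) _ (by omega) h
        exact Or.inl (Fin.ext (by omega))

lemma cyc_false (hdf : Dfree P)
    (hZ : ∀ n : ℕ, 4 ≤ n → Even n →
      ¬ ∃ f : Fin n → P, Function.Injective f ∧
        ∀ a b : Fin n,
          (a = b ∨ (Even a.val ∧ (b.val = (a.val + 1) % n ∨ b.val = (a.val + (n - 1)) % n)))
            ↔ f a ≤ f b)
    {k : ℕ} (hk : 3 ≤ k) (w : ℕ → P)
    (hper : ∀ i, w (i + k) = w i)
    (hadj : ∀ i, w i ⋖ w (i + 1) ∨ w (i + 1) ⋖ w i)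
    (hinj : ∀ i, i < k → ∀ j, j < k → w i = w j → i = j)
    (hmax : ∀ i, ¬ w 0 < w i) : False := by
  classical
  have hk0 : 0 < k := by omega
  have hwk : w k = w 0 := by have := hper 0; rwa [Nat.zero_add] at this
  have hwk1 : w (k + 1) = w 1 := by have := hper 1; rwa [Nat.add_comm 1 k] at this
  have hdown : ∀ i, ¬ w i ⋖ w (i + 1) → w (i + 1) ⋖ w i := fun i h => (hadj i).resolve_left h
  have hupper : ∀ i, (w (i + k) ⋖ w (i + k + 1)) ↔ (w i ⋖ w (i + 1)) := by
    intro i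
    rw [hper i, show i + k + 1 = (i + 1) + k by ring, hper (i + 1)]
  have hupmod : ∀ q i, (w (q * k + i) ⋖ w (q * k + i + 1)) ↔ (w i ⋖ w (i + 1)) := by
    intro q
    induction q with
    | zero => intro i; rw [Nat.zero_mul, Nat.zero_add]
    | succ q ih =>
      intro i
      have e1 : (q + 1) * k + i = (q * k + i) + k := by ring
      rw [e1, hupper (q * k + i)]
      exact ih i
  have hup0 : ¬ w 0 ⋖ w 1 := fun h => hmax 1 h.1
  have hupk' : ¬ w k ⋖ w (k + 1) := by
    have := hupmod 1 0
    rw [Nat.one_mul, Nat.add_zero] at this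
    intro h; exact hup0 (this.mp h)
  have hupk : w (k - 1) ⋖ w (k - 1 + 1) := by
    by_contra h
    have h2 := hdown _ h
    rw [show k - 1 + 1 = k by omega, hwk] at h2
    exact hmax (k - 1) h2.1
  have hrundown : ∀ p q, p ≤ q → (∀ s, p ≤ s → s < q → ¬ w s ⋖ w (s + 1)) → w q ≤ w p := by
    intro p q hpq hall
    induction q, hpq using Nat.le_induction with
    | base => exact le_rfl
    | succ q hpq ih =>
      have hd := hdown q (hall q hpq (by omega))
      exact hd.1.le.trans (ih fun s hs1 hs2 => hall s hs1 (by omega))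
  have hrunup : ∀ p q, p ≤ q → (∀ s, p ≤ s → s < q → w s ⋖ w (s + 1)) → w p ≤ w q := by
    intro p q hpq hall
    induction q, hpq using Nat.le_induction with
    | base => exact le_rfl
    | succ q hpq ih =>
      exact (ih fun s hs1 hs2 => hall s hs1 (by omega)).trans (hall q hpq (by omega)).1.le
  -- the "next direction change" function
  have hnxtex : ∀ i, ∃ j, ((i < j ∧ ¬ ((w j ⋖ w (j + 1)) ↔ (w i ⋖ w (i + 1)))) ∧
      ∀ s, i < s → s < j → ((w s ⋖ w (s + 1)) ↔ (w i ⋖ w (i + 1)))) := by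
    intro i
    have hne : Set.Nonempty {j | i < j ∧ ¬ ((w j ⋖ w (j + 1)) ↔ (w i ⋖ w (i + 1)))} := by
      by_cases h : w i ⋖ w (i + 1)
      · refine ⟨(i + 1) * k, ?_, ?_⟩
        · calc i < i + 1 := by omega
            _ ≤ (i + 1) * k := Nat.le_mul_of_pos_right (i + 1) hk0
        · have h0 := hupmod (i + 1) 0
          rw [Nat.add_zero] at h0
          intro hiff
          exact hup0 (h0.mp (hiff.mpr h))
      · refine ⟨(i + 1) * k + (k - 1), ?_, ?_⟩
        · have : i + 1 ≤ (i + 1) * k := Nat.le_mul_of_pos_right (i + 1) hk0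
          omega
        · have h0 := hupmod (i + 1) (k - 1)
          intro hiff
          exact h (hiff.mp (h0.mpr hupk))
      
    refine ⟨sInf _, Nat.sInf_mem hne, ?_⟩
    intro s hs1 hs2
    have := Nat.notMem_of_lt_sInf hs2
    simp only [Set.mem_setOf_eq, not_and, not_not] at this
    exact this hs1
  choose nxt hnxt using hnxtex
  have hn1 : ∀ i, i < nxt i := fun i => (hnxt i).1.1
  have hn2 : ∀ i, ¬ ((w (nxt i) ⋖ w (nxt i + 1)) ↔ (w i ⋖ w (i + 1))) := fun i => (hnxt i).1.2
  have hn3 : ∀ i s, i < s → s < nxt i → ((w s ⋖ w (s + 1)) ↔ (w i ⋖ w (i + 1))) :=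
    fun i => (hnxt i).2
  -- the sequence of direction changes
  set e : ℕ → ℕ := fun s => nxt^[s] 0 with hedef
  have he0 : e 0 = 0 := rfl
  have heS : ∀ s, e (s + 1) = nxt (e s) := fun s => Function.iterate_succ_apply' nxt s 0
  have hemono : ∀ s, e s < e (s + 1) := by intro s; rw [heS]; exact hn1 (e s)
  have hlt : ∀ a b, a < b → e a < e b := by
    intro a b hab
    induction b, hab using Nat.le_induction with
    | base => exact hemono a
    | succ b hab ih => exact ih.trans (hemono b)
  have hgrow : ∀ s, s ≤ e s := by
    intro s
    induction s with
    | zero => omega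
    | succ s ih => have := hemono s; omega
  have halt : ∀ s, (w (e s) ⋖ w (e s + 1)) ↔ Odd s := by
    intro s
    induction s with
    | zero =>
      rw [he0]
      simp only [Nat.odd_iff]
      constructor
      · intro h; exact absurd h hup0
      · omega
    | succ s ih =>
      rw [heS]
      rw [Nat.odd_add_one, ← ih]
      have := hn2 (e s)
      tauto
  -- the first index where `e` reaches `k`
  obtain ⟨T, hTk, hTmin⟩ : ∃ T, k ≤ e T ∧ ∀ s, s < T → e s < k := by
    have hne : Set.Nonempty {T | k ≤ e T} := ⟨k, hgrow k⟩
    refine ⟨sInf _, Nat.sInf_mem hne, ?_⟩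
    intro s hs
    have := Nat.notMem_of_lt_sInf hs
    simp only [Set.mem_setOf_eq, not_le] at this
    exact this
  have hT1 : 1 ≤ T := by
    rcases Nat.eq_zero_or_pos T with h | h
    · rw [h, he0] at hTk; omega
    · exact h
  have heT : e T = k := by
    by_contra hne
    have hkT : k < e T := by omega
    have hprev : e (T - 1) < k := hTmin (T - 1) (by omega)
    have heq : e T = nxt (e (T - 1)) := by
      have := heS (T - 1)
      rwa [show T - 1 + 1 = T by omega] at this
    have hupkk : ¬ w k ⋖ w (k + 1) := hupk'
    by_cases hek : e (T - 1) = k - 1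
    · have h1 : (w k ⋖ w (k + 1)) ↔ (w (e (T - 1)) ⋖ w (e (T - 1) + 1)) := by
        apply hn3 (e (T - 1)) k (by omega)
        rw [← heq]; exact hkT
      rw [hek, show k - 1 + 1 = k by omega] at h1
      exact hupkk (h1.mpr (by rwa [show k - 1 + 1 = k by omega] at hupk))
    · have h1 : (w k ⋖ w (k + 1)) ↔ (w (e (T - 1)) ⋖ w (e (T - 1) + 1)) := by
        apply hn3 (e (T - 1)) k (by omega)
        rw [← heq]; exact hkT
      have h2 : (w (k - 1) ⋖ w (k - 1 + 1)) ↔ (w (e (T - 1)) ⋖ w (e (T - 1) + 1)) := by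
        apply hn3 (e (T - 1)) (k - 1) (by omega)
        rw [← heq]; omega
      exact hupkk (h1.mpr (h2.mp hupk))
  have hTodd : ¬ Odd T := by
    intro h
    have := (halt T).mpr h
    rw [heT] at this
    exact hupk' this
  obtain ⟨m, hTm⟩ : ∃ m, T = 2 * m := by
    have := Nat.odd_iff.not.mp hTodd
    exact ⟨T / 2, by omega⟩
  have hm1 : 1 ≤ m := by omega
  -- segment monotonicity
  have hseg_le : ∀ s, ¬ Odd s → ∀ p q, e s ≤ p → p ≤ q → q ≤ e (s + 1) → w q ≤ w p := by
    intro s hs p q h1 h2 h3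
    apply hrundown p q h2
    intro r hr1 hr2
    intro hup
    have hr3 : r < e (s + 1) := by omega
    have hiff : (w r ⋖ w (r + 1)) ↔ (w (e s) ⋖ w (e s + 1)) := by
      rcases Nat.lt_or_ge (e s) r with h | h
      · rw [heS s] at hr3; exact hn3 (e s) r h hr3
      · have : r = e s := by omega
        rw [this]
    exact hs ((halt s).mp (hiff.mp hup))
  have hseg_ge : ∀ s, Odd s → ∀ p q, e s ≤ p → p ≤ q → q ≤ e (s + 1) → w p ≤ w q := by
    intro s hs p q h1 h2 h3
    apply hrunup p q h2
    intro r hr1 hr2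
    have hr3 : r < e (s + 1) := by omega
    have hiff : (w r ⋖ w (r + 1)) ↔ (w (e s) ⋖ w (e s + 1)) := by
      rcases Nat.lt_or_ge (e s) r with h | h
      · rw [heS s] at hr3; exact hn3 (e s) r h hr3
      · have : r = e s := by omega
        rw [this]
    exact hiff.mpr ((halt s).mpr hs)
  have hseg_le2 : ∀ s s', s + 1 = s' → ¬ Odd s → ∀ p q, e s ≤ p → p ≤ q → q ≤ e s' →
      w q ≤ w p := by
    intro s s' hs hodd p q h1 h2 h3
    subst hs
    exact hseg_le s hodd p q h1 h2 h3
  have hseg_ge2 : ∀ s s', s + 1 = s' → Odd s → ∀ p q, e s ≤ p → p ≤ q → q ≤ e s' →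
      w p ≤ w q := by
    intro s s' hs hodd p q h1 h2 h3
    subst hs
    exact hseg_ge s hodd p q h1 h2 h3
  -- covers at a local minimum
  have hmincov : ∀ j, Odd j → j < T →
      (w (e j) ⋖ w (e j - 1)) ∧ (w (e j) ⋖ w (e j + 1)) ∧ w (e j - 1) ≠ w (e j + 1) := by
    intro j hj hjT
    have hj1 : 1 ≤ j := by rcases hj with ⟨r, hr⟩; omega
    have hq1 : 1 ≤ e j := le_trans hj1 (hgrow j)
    have hqk : e j < k := hTmin j hjT
    have c2 : w (e j) ⋖ w (e j + 1) := (halt j).mpr hj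
    have hprev : e (j - 1) < e j := hlt (j - 1) j (by omega)
    have hupq : ¬ w (e j - 1) ⋖ w (e j - 1 + 1) := by
      have hiff : (w (e j - 1) ⋖ w (e j - 1 + 1)) ↔ (w (e (j - 1)) ⋖ w (e (j - 1) + 1)) := by
        rcases Nat.lt_or_ge (e (j - 1)) (e j - 1) with h | h
        · have hlt2 : e j - 1 < nxt (e (j - 1)) := by
            have h5 := heS (j - 1)
            rw [show j - 1 + 1 = j by omega] at h5
            omega
          exact hn3 (e (j - 1)) (e j - 1) h hlt2
        · have : e j - 1 = e (j - 1) := by omega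
          rw [this]
      intro hcon
      have h6 := (halt (j - 1)).mp (hiff.mp hcon)
      rcases h6 with ⟨r, hr⟩
      rcases hj with ⟨r2, hr2⟩
      omega
    have c1 : w (e j) ⋖ w (e j - 1) := by
      have := hdown _ hupq
      rwa [show e j - 1 + 1 = e j by omega] at this
    refine ⟨c1, c2, ?_⟩
    intro hcon
    by_cases hek : e j + 1 = k
    · rw [hek, hwk] at hcon
      have := hinj (e j - 1) (by omega) 0 (by omega) hcon
      omega
    · have := hinj (e j - 1) (by omega) (e j + 1) (by omega) hcon
      omega
  -- covers at a local maximum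
  have hmaxcov : ∀ j, 1 ≤ j → ¬ Odd j → j ≤ T →
      (w (e j - 1) ⋖ w (e j)) ∧ (w (e j + 1) ⋖ w (e j)) ∧ w (e j - 1) ≠ w (e j + 1) := by
    intro j hj1 hj hjT
    have hj2 : 2 ≤ j := by
      rcases Nat.even_or_odd j with h | h
      · rcases h with ⟨r, hr⟩; omega
      · exact absurd h hj
    have hq2 : 2 ≤ e j := le_trans hj2 (hgrow j)
    have hqk : e j ≤ k := by
      rcases Nat.lt_or_ge j T with h | h
      · exact (hTmin j h).le
      · have : j = T := by omega
        rw [this, heT]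
    have hprev : e (j - 1) < e j := hlt (j - 1) j (by omega)
    have hup1 : w (e j - 1) ⋖ w (e j - 1 + 1) := by
      have hiff : (w (e j - 1) ⋖ w (e j - 1 + 1)) ↔ (w (e (j - 1)) ⋖ w (e (j - 1) + 1)) := by
        rcases Nat.lt_or_ge (e (j - 1)) (e j - 1) with h | h
        · have hlt2 : e j - 1 < nxt (e (j - 1)) := by
            have h5 := heS (j - 1)
            rw [show j - 1 + 1 = j by omega] at h5
            omega
          exact hn3 (e (j - 1)) (e j - 1) h hlt2
        · have : e j - 1 = e (j - 1) := by omega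
          rw [this]
      apply hiff.mpr
      apply (halt (j - 1)).mpr
      rcases Nat.even_or_odd j with h | h
      · rcases h with ⟨r, hr⟩
        exact ⟨r - 1, by omega⟩
      · exact absurd h hj
    have c1 : w (e j - 1) ⋖ w (e j) := by
      have := hup1
      rwa [show e j - 1 + 1 = e j by omega] at this
    have hupq : ¬ w (e j) ⋖ w (e j + 1) := by
      rcases Nat.lt_or_ge j T with h | h
      · intro hcon
        exact hj ((halt j).mp hcon)
      · have : j = T := by omega
        rw [this, heT]
        exact hupk'
    have c2 : w (e j + 1) ⋖ w (e j) := hdown _ hupq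
    refine ⟨c1, c2, ?_⟩
    intro hcon
    by_cases hek : e j = k
    · rw [hek, hwk1] at hcon
      have := hinj (k - 1) (by omega) 1 (by omega) hcon
      omega
    · by_cases hek1 : e j + 1 = k
      · rw [hek1, hwk] at hcon
        have := hinj (e j - 1) (by omega) 0 (by omega) hcon
        omega
      · have := hinj (e j - 1) (by omega) (e j + 1) (by omega) hcon
        omega
  rcases Nat.lt_or_ge m 2 with hm | hm
  · -- a single minimum : a diamond
    obtain ⟨c1, c2, hcne⟩ := hmincov 1 ⟨0, by omega⟩ (by omega)
    have he01 : e 0 < e 1 := hlt 0 1 (by omega)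
    have he12 : e 1 < e 2 := hlt 1 2 (by omega)
    have hb : w (e 1 - 1) ≤ w 0 := by
      have h := hseg_le2 0 1 rfl (by rintro ⟨r, hr⟩; omega) 0 (e 1 - 1)
        (by rw [he0]) (by omega) (by omega)
      exact h
    have hc : w (e 1 + 1) ≤ w 0 := by
      have h := hseg_ge2 1 2 rfl ⟨0, by omega⟩ (e 1 + 1) (e 2) (by omega) (by omega) le_rfl
      rwa [show (2:ℕ) = T by omega, heT, hwk] at h
    exact cov_diamond_top hdf c1 c2 hcne hb hc
  · -- at least two minima : a fence
    have hF : Fence (fun s => w (e (2 * s + 1))) (fun s => w (e (2 * s + 2))) m := by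
      constructor
      · exact hm
      · intro i hi j hj hcon
        try simp only at hcon
        by_cases hjT : 2 * j + 2 = T
        · rw [hjT, heT, hwk] at hcon
          have h1 := hinj (e (2 * i + 1)) (hTmin _ (by omega)) 0 (by omega) hcon
          have h2 := hlt 0 (2 * i + 1) (by omega)
          rw [he0] at h2
          omega
        · have h2 : e (2 * j + 2) < k := hTmin _ (by omega)
          have h3 := hinj (e (2 * i + 1)) (hTmin _ (by omega)) (e (2 * j + 2)) h2 hcon
          have h4 : 2 * i + 1 < 2 * j + 2 ∨ 2 * j + 2 < 2 * i + 1 := by omega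
          rcases h4 with h | h
          · have := hlt _ _ h; omega
          · have := hlt _ _ h; omega
      · intro i hi
        have h1 := hlt (2 * i + 1) (2 * i + 2) (by omega)
        exact hseg_ge2 (2 * i + 1) (2 * i + 2) (by ring) ⟨i, by ring⟩ (e (2 * i + 1))
          (e (2 * i + 2)) le_rfl (by omega) le_rfl
      · intro i hi
        try simp only
        rw [show 2 * (i + 1) + 1 = 2 * i + 3 by ring]
        have h1 := hlt (2 * i + 2) (2 * i + 3) (by omega)
        exact hseg_le2 (2 * i + 2) (2 * i + 3) (by ring) (by rintro ⟨r, hr⟩; omega)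
          (e (2 * i + 2)) (e (2 * i + 3)) le_rfl (by omega) le_rfl
      · try simp only
        rw [show 2 * (m - 1) + 2 = T by omega, heT, hwk]
        have h1 := hlt 0 1 (by omega)
        rw [he0] at h1
        have h := hseg_le2 0 1 rfl (by rintro ⟨r, hr⟩; omega) 0 (e 1)
          (by rw [he0]) (by omega) le_rfl
        exact le_trans (le_of_eq (by rw [show 2 * 0 + 1 = 1 by ring])) h
      · intro i hi d hd1 hd2
        try simp only at hd1 hd2
        rw [show 2 * (i + 1) + 2 = 2 * i + 4 by ring] at hd2
        obtain ⟨c1, c2, hcne⟩ := hmincov (2 * i + 3) ⟨i + 1, by ring⟩ (by omega)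
        have h1 := hlt (2 * i + 2) (2 * i + 3) (by omega)
        have h2 := hlt (2 * i + 3) (2 * i + 4) (by omega)
        have hb : w (e (2 * i + 3) - 1) ≤ w (e (2 * i + 2)) :=
          hseg_le2 (2 * i + 2) (2 * i + 3) (by ring) (by rintro ⟨r, hr⟩; omega)
            (e (2 * i + 2)) (e (2 * i + 3) - 1) le_rfl (by omega) (by omega)
        have hc : w (e (2 * i + 3) + 1) ≤ w (e (2 * i + 4)) :=
          hseg_ge2 (2 * i + 3) (2 * i + 4) (by ring) ⟨i + 1, by ring⟩
            (e (2 * i + 3) + 1) (e (2 * i + 4)) (by omega) (by omega) le_rfl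
        exact cov_diamond_top hdf c1 c2 hcne (hb.trans hd1) (hc.trans hd2)
      · intro d hd1 hd2
        try simp only at hd1 hd2
        rw [show 2 * (m - 1) + 2 = T by omega, heT, hwk] at hd1
        rw [show 2 * 0 + 2 = 2 by ring] at hd2
        obtain ⟨c1, c2, hcne⟩ := hmincov 1 ⟨0, by omega⟩ (by omega)
        have h1 := hlt 0 1 (by omega)
        have h2 := hlt 1 2 (by omega)
        rw [he0] at h1
        have hb : w (e 1 - 1) ≤ w 0 :=
          hseg_le2 0 1 rfl (by rintro ⟨r, hr⟩; omega) 0 (e 1 - 1) (by rw [he0]) (by omega)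
            (by omega)
        have hc : w (e 1 + 1) ≤ w (e 2) :=
          hseg_ge2 1 2 rfl ⟨0, by omega⟩ (e 1 + 1) (e 2) (by omega) (by omega) le_rfl
        exact cov_diamond_top hdf c1 c2 hcne (hb.trans hd1) (hc.trans hd2)
      · intro i hi d hd1 hd2
        try simp only at hd1 hd2
        rw [show 2 * (i + 1) + 1 = 2 * i + 3 by ring] at hd2
        obtain ⟨c1, c2, hcne⟩ := hmaxcov (2 * i + 2) (by omega) (by rintro ⟨r, hr⟩; omega)
          (by omega)
        have h1 := hlt (2 * i + 1) (2 * i + 2) (by omega)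
        have h2 := hlt (2 * i + 2) (2 * i + 3) (by omega)
        have hb : w (e (2 * i + 1)) ≤ w (e (2 * i + 2) - 1) :=
          hseg_ge2 (2 * i + 1) (2 * i + 2) (by ring) ⟨i, by ring⟩
            (e (2 * i + 1)) (e (2 * i + 2) - 1) le_rfl (by omega) (by omega)
        have hc : w (e (2 * i + 3)) ≤ w (e (2 * i + 2) + 1) :=
          hseg_le2 (2 * i + 2) (2 * i + 3) (by ring) (by rintro ⟨r, hr⟩; omega)
            (e (2 * i + 2) + 1) (e (2 * i + 3)) (by omega) (by omega) le_rfl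
        exact cov_diamond_bot hdf c1 c2 hcne (hd1.trans hb) (hd2.trans hc)
      · intro d hd1 hd2
        try simp only at hd1 hd2
        rw [show 2 * (m - 1) + 1 = T - 1 by omega] at hd1
        rw [show 2 * 0 + 1 = 1 by ring] at hd2
        obtain ⟨c1, c2, hcne⟩ := hmaxcov T (by omega) hTodd le_rfl
        rw [heT] at c1 c2 hcne
        have hprev : e (T - 1) < k := hTmin (T - 1) (by omega)
        have h1 := hlt 0 1 (by omega)
        rw [he0] at h1
        have hb : w (e (T - 1)) ≤ w (k - 1) := by
          have h5 := heS (T - 1)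
          rw [show T - 1 + 1 = T by omega] at h5
          have := hseg_ge2 (T - 1) T (by omega) (by
            rcases Nat.even_or_odd (T - 1) with h | h
            · rcases h with ⟨r, hr⟩; omega
            · exact h) (e (T - 1)) (k - 1) le_rfl (by omega) (by rw [heT]; omega)
          exact this
        have hc : w (e 1) ≤ w (k + 1) := by
          rw [hwk1]
          exact hseg_le2 0 1 rfl (by rintro ⟨r, hr⟩; omega) 1 (e 1) (by rw [he0]; omega)
            (by omega) le_rfl
        exact cov_diamond_bot hdf c1 c2 hcne (hd1.trans hb) (hd2.trans hc)
    exact no_fence hdf hZ hF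

lemma walk_getVert_support {V : Type*} {G : SimpleGraph V} {u v : V} (p : G.Walk u v) :
    ∀ (i : ℕ) (h : i < p.support.length), p.support[i] = p.getVert i := by
  induction p with
  | nil =>
    intro i h
    simp only [SimpleGraph.Walk.support_nil, List.length_singleton] at h
    have : i = 0 := by omega
    subst this
    rfl
  | cons hadj q ih =>
    intro i h
    cases i with
    | zero => rfl
    | succ n =>
      rw [List.getElem_of_eq (SimpleGraph.Walk.support_cons _ _) h, List.getElem_cons_succ,
        SimpleGraph.Walk.getVert_cons_succ]
      exact ih n (by rw [SimpleGraph.Walk.support_cons] at h; simpa using h)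

end Hasse19

/-!
STATEMENT 19.  A finite connected diamond-free poset with no full subposet isomorphic to a
crown `Z_n` (even `n ≥ 4`) has a Hasse diagram which is a tree.  The Hasse diagram is the
graph on `P` whose edges join `a` and `b` whenever one covers the other.
-/

open Hasse19 in
theorem hasse_isTree_of_diamondFree_no_crown
    {P : Type*} [PartialOrder P] [Finite P]
    (hdf : ¬ ∃ a b c d : P, a ≤ b ∧ b ≤ d ∧ a ≤ c ∧ c ≤ d ∧ ¬ b ≤ c ∧ ¬ c ≤ b)
    (hZ : ∀ n : ℕ, 4 ≤ n → Even n →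
      ¬ ∃ f : Fin n → P, Function.Injective f ∧
        ∀ a b : Fin n,
          (a = b ∨ (Even a.val ∧ (b.val = (a.val + 1) % n ∨ b.val = (a.val + (n - 1)) % n)))
            ↔ f a ≤ f b)
    (hconn : (SimpleGraph.fromRel (fun a b : P => a ⋖ b)).Connected) :
    (SimpleGraph.fromRel (fun a b : P => a ⋖ b)).IsTree := by
  classical
  refine ⟨hconn, ?_⟩
  intro v c hc
  have hdf' : Dfree P := hdf
  set k := c.length with hkdef
  have hk : 3 ≤ k := hc.three_le_length
  have hk0 : 0 < k := by omega
  have hsuplen : c.support.length = k + 1 := by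
    rw [SimpleGraph.Walk.length_support]
  have hgv0 : c.getVert 0 = v := c.getVert_zero
  have hgvk : c.getVert k = v := c.getVert_length
  -- injectivity of getVert on [0, k)
  have winj0 : ∀ i, i < k → ∀ j, j < k → c.getVert i = c.getVert j → i = j := by
    have hnodup := hc.support_nodup
    have htail : ∀ i, i < k → ∃ h : i < c.support.tail.length,
        c.support.tail[i] = c.getVert (i + 1) := by
      intro i hi
      have hlen : c.support.tail.length = k := by
        rw [List.length_tail, hsuplen]
        omega
      refine ⟨by omega, ?_⟩
      rw [List.getElem_tail]
      exact walk_getVert_support c (i + 1) (by omega)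
    have key : ∀ i, 1 ≤ i → i ≤ k → ∀ j, 1 ≤ j → j ≤ k →
        c.getVert i = c.getVert j → i = j := by
      intro i hi1 hik j hj1 hjk heq
      obtain ⟨hle1, he1⟩ := htail (i - 1) (by omega)
      obtain ⟨hle2, he2⟩ := htail (j - 1) (by omega)
      rw [show i - 1 + 1 = i by omega] at he1
      rw [show j - 1 + 1 = j by omega] at he2
      have h9 : c.support.tail[i - 1]'hle1 = c.support.tail[j - 1]'hle2 := by
        rw [he1, he2]; exact heq
      have := (hnodup.getElem_inj_iff).mp h9
      omega
    intro i hi j hj heq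
    by_cases hi0 : i = 0
    · by_cases hj0 : j = 0
      · omega
      · subst hi0
        have heq' : c.getVert k = c.getVert j := (hgvk.trans hgv0.symm).trans heq
        have := key k (by omega) le_rfl j (by omega) (by omega) heq'
        omega
    · by_cases hj0 : j = 0
      · subst hj0
        have heq' : c.getVert i = c.getVert k := heq.trans (hgv0.trans hgvk.symm)
        have := key i (by omega) (by omega) k (by omega) le_rfl heq'
        omega
      · exact key i (by omega) (by omega) j (by omega) (by omega) heq
  -- choose a maximal vertex on the cycle
  obtain ⟨mv, hmv, hmvmax⟩ :=
    Finset.exists_maximal (s := (Finset.range k).image (fun i => c.getVert i))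
      ⟨c.getVert 0, Finset.mem_image.mpr ⟨0, Finset.mem_range.mpr hk0, rfl⟩⟩
  obtain ⟨i₀, hi₀, hi₀v⟩ := Finset.mem_image.mp hmv
  rw [Finset.mem_range] at hi₀
  -- the rotated cyclic sequence
  set w : ℕ → P := fun i => c.getVert ((i + i₀) % k) with hwdef
  have hmodsmall : ∀ a, a < 2 * k → a % k = if a < k then a else a - k := by
    intro a ha
    by_cases h : a < k
    · rw [if_pos h, Nat.mod_eq_of_lt h]
    · rw [if_neg h, Nat.mod_eq_sub_mod (by omega), Nat.mod_eq_of_lt (by omega)]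
  have hper : ∀ i, w (i + k) = w i := by
    intro i
    show c.getVert ((i + k + i₀) % k) = c.getVert ((i + i₀) % k)
    rw [show i + k + i₀ = (i + i₀) + k by ring, Nat.add_mod_right]
  have hstep : ∀ j, j < k →
      (c.getVert j ⋖ c.getVert (j + 1) ∨ c.getVert (j + 1) ⋖ c.getVert j) := by
    intro j hj
    have hA := c.adj_getVert_succ (by omega : j < c.length)
    rw [SimpleGraph.fromRel_adj] at hA
    exact hA.2
  have hw1 : ∀ i, w (i + 1) = c.getVert ((i + i₀) % k + 1) := by
    intro i
    show c.getVert ((i + 1 + i₀) % k) = _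
    have h1 : (i + 1 + i₀) % k = ((i + i₀) % k + 1) % k := by
      rw [show i + 1 + i₀ = (i + i₀) + 1 by ring, Nat.add_mod (i + i₀) 1 k,
        Nat.mod_eq_of_lt (show 1 < k by omega)]
    rw [h1]
    have hjk : (i + i₀) % k < k := Nat.mod_lt _ hk0
    by_cases h : (i + i₀) % k + 1 = k
    · rw [h, Nat.mod_self]
      exact hgv0.trans hgvk.symm
    · rw [Nat.mod_eq_of_lt (by omega)]
  have hadj : ∀ i, w i ⋖ w (i + 1) ∨ w (i + 1) ⋖ w i := by
    intro i
    rw [hw1 i]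
    exact hstep _ (Nat.mod_lt _ hk0)
  have hinj : ∀ i, i < k → ∀ j, j < k → w i = w j → i = j := by
    intro i hi j hj heq
    have h1 : (i + i₀) % k = (j + i₀) % k :=
      winj0 _ (Nat.mod_lt _ hk0) _ (Nat.mod_lt _ hk0) heq
    rw [hmodsmall (i + i₀) (by omega), hmodsmall (j + i₀) (by omega)] at h1
    split_ifs at h1 <;> omega
  have hmaxw : ∀ i, ¬ w 0 < w i := by
    intro i hlt
    have h0 : w 0 = c.getVert i₀ := by
      show c.getVert ((0 + i₀) % k) = _
      rw [Nat.zero_add, Nat.mod_eq_of_lt hi₀]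
    rw [h0, hi₀v] at hlt
    exact (not_le_of_gt hlt) (hmvmax
      (Finset.mem_image.mpr ⟨(i + i₀) % k, Finset.mem_range.mpr (Nat.mod_lt _ hk0), rfl⟩) hlt.le)
  exact cyc_false hdf' hZ hk w hper hadj hinj hmaxw
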